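/- Let Δ = 1/K for a positive integer K, and consider the uniform quantization grid {Δ/2, 3Δ/2, …, 1 − Δ/2} of [0,1], of size 1/Δ. Assume that with probability at least 1−δ over the i.i.d. sample S of size N, all graph clustering models whose cluster-level predictions take values in the grid satisfy the bound kl(L̂‖L) ≤ [ |X| Ī(X;C) + |C| ln|X| + |C|² ln(1/Δ) + (1/2) ln(4N) − ln δ ] / N (the grid-valued version of the PAC-Bayesian graph clustering bound). Then, with probability at least 1−δ over S, simultaneously for all graph clustering models Q = (q(C|X), g) with arbitrary continuous cluster-level predictions g : C × C → [0,1] and quadratic loss: L(Q) ≤ kl⁻¹( L̂(Q) + Δ + Δ²/4 , [ |X| · Ī(X;C) + |C| ln|X| − |C|² ln Δ + (1/2) ln(4N/δ²) ] / N ) + Δ + Δ²/4. -/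

import Mathlib

open MeasureTheory

/-- Bernoulli KL divergence `kl(p‖q)`, with the conventions `0 ln 0 = 0` and
`kl(p‖q) = +∞` when `q ∈ {0,1}` unless `p = q`. -/
noncomputable def klBer (p q : ℝ) : EReal :=
  if q = 0 then (if p = 0 then (0 : EReal) else ⊤)
  else if q = 1 then (if p = 1 then (0 : EReal) else ⊤)
  else (((p * Real.log (p / q) + (1 - p) * Real.log ((1 - p) / (1 - q))) : ℝ) : EReal)

/-- The inverse KL divergence `kl⁻¹(p̂, B) = max { z ∈ [0,1] : kl(p̂‖z) ≤ B }`. -/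
noncomputable def klInv (phat B : ℝ) : ℝ :=
  sSup {z : ℝ | z ∈ Set.Icc (0 : ℝ) 1 ∧ klBer phat z ≤ (B : EReal)}

/-- The mutual information `Ī(X;C)` of the joint distribution `q̄(x,c) = q(c|x)/|X|`
(uniform marginal over `X`). -/
noncomputable def barMI {X : Type*} [Fintype X] {nC : ℕ} (q : X → Fin nC → ℝ) : ℝ :=
  (1 / (Fintype.card X : ℝ)) *
    ∑ x : X, ∑ c : Fin nC,
      q x c * Real.log (q x c / ((1 / (Fintype.card X : ℝ)) * ∑ x' : X, q x' c))

noncomputable def klReal (p q : ℝ) : ℝ :=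
  p * Real.log (p / q) + (1 - p) * Real.log ((1 - p) / (1 - q))

lemma klBer_of_Ioo {q : ℝ} (hq : q ∈ Set.Ioo (0:ℝ) 1) (p : ℝ) :
    klBer p q = ((klReal p q : ℝ) : EReal) := by
  rw [klBer, if_neg hq.1.ne', if_neg hq.2.ne, klReal]

lemma klReal_nonneg {p q : ℝ} (hp : p ∈ Set.Icc (0:ℝ) 1) (hq : q ∈ Set.Ioo (0:ℝ) 1) :
    0 ≤ klReal p q := by
  obtain ⟨hp0, hp1⟩ := hp
  obtain ⟨hq0, hq1⟩ := hq
  rcases eq_or_lt_of_le hp0 with h0 | h0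
  · simp only [klReal, ← h0]
    have : Real.log (1 / (1 - q)) = - Real.log (1 - q) := by
      rw [one_div, Real.log_inv]
    simp only [zero_mul, sub_zero, one_mul, zero_div, Real.log_zero, mul_zero, zero_add, this]
    have : Real.log (1 - q) ≤ 0 := Real.log_nonpos (by linarith) (by linarith)
    linarith
  rcases eq_or_lt_of_le hp1 with h1 | h1
  · simp only [klReal, h1]
    have : Real.log (1 / q) = - Real.log q := by rw [one_div, Real.log_inv]
    simp only [sub_self, zero_mul, add_zero, one_mul, zero_div, Real.log_zero, mul_zero, this]
    have : Real.log q ≤ 0 := Real.log_nonpos (by linarith) (by linarith)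
    linarith
  · have hl1 : Real.log (q / p) ≤ q / p - 1 := Real.log_le_sub_one_of_pos (by positivity)
    have hl2 : Real.log ((1 - q) / (1 - p)) ≤ (1 - q) / (1 - p) - 1 :=
      Real.log_le_sub_one_of_pos (by apply div_pos <;> linarith)
    have e1 : Real.log (p / q) = - Real.log (q / p) := by
      rw [Real.log_div h0.ne' hq0.ne', Real.log_div hq0.ne' h0.ne']; ring
    have e2 : Real.log ((1 - p) / (1 - q)) = - Real.log ((1 - q) / (1 - p)) := by
      rw [Real.log_div (by linarith) (by linarith), Real.log_div (by linarith) (by linarith)]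
      ring
    have m1 : p * Real.log (q / p) ≤ q - p := by
      have := mul_le_mul_of_nonneg_left hl1 hp0
      have e : p * (q / p - 1) = q - p := by field_simp
      linarith [e ▸ this]
    have m2 : (1 - p) * Real.log ((1 - q) / (1 - p)) ≤ p - q := by
      have := mul_le_mul_of_nonneg_left hl2 (by linarith : (0:ℝ) ≤ 1 - p)
      have hne : (1:ℝ) - p ≠ 0 := by linarith
      have e : (1 - p) * ((1 - q) / (1 - p) - 1) = p - q := by
        field_simp
        ring
      linarith [e ▸ this]
    rw [klReal, e1, e2]
    nlinarith

lemma klBer_nonneg {p q : ℝ} (hp : p ∈ Set.Icc (0:ℝ) 1) (hq : q ∈ Set.Icc (0:ℝ) 1) :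
    (0 : EReal) ≤ klBer p q := by
  rw [klBer]
  split_ifs with h1 h2 h3 h4
  · exact le_refl _
  · exact le_top
  · exact le_refl _
  · exact le_top
  · rw [show (0:EReal) = ((0:ℝ):EReal) from rfl, EReal.coe_le_coe_iff]
    exact klReal_nonneg hp ⟨lt_of_le_of_ne hq.1 (Ne.symm h1), lt_of_le_of_ne hq.2 h3⟩

lemma klBer_self {q : ℝ} (_hq : q ∈ Set.Icc (0:ℝ) 1) : klBer q q = 0 := by
  rw [klBer]
  split_ifs with h1 h2 <;> try rfl
  rw [div_self h1, div_self (fun h => h2 (by linarith [sub_eq_zero.mp h])), Real.log_one]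
  norm_num

lemma klReal_eq {q : ℝ} (hq0 : q ≠ 0) (hq1 : q ≠ 1) (t : ℝ) :
    klReal t q = (t * Real.log t + (1 - t) * Real.log (1 - t))
      + ((Real.log (1 - q) - Real.log q) * t + (- Real.log (1 - q))) := by
  have h1 : t * Real.log (t / q) = t * Real.log t - t * Real.log q := by
    rcases eq_or_ne t 0 with h | h
    · simp [h]
    · rw [Real.log_div h hq0]; ring
  have h2 : (1 - t) * Real.log ((1 - t) / (1 - q)) =
      (1 - t) * Real.log (1 - t) - (1 - t) * Real.log (1 - q) := by
    rcases eq_or_ne (1 - t) 0 with h | h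
    · simp [h]
    · rw [Real.log_div h (sub_ne_zero.mpr (Ne.symm hq1))]; ring
  rw [klReal, h1, h2]; ring

lemma convexOn_klReal {q : ℝ} (hq0 : q ≠ 0) (hq1 : q ≠ 1) :
    ConvexOn ℝ (Set.Icc (0:ℝ) 1) (fun t => klReal t q) := by
  have h1 : ConvexOn ℝ (Set.Icc (0:ℝ) 1) (fun t : ℝ => t * Real.log t) :=
    Real.convexOn_mul_log.subset (fun x hx => hx.1) (convex_Icc _ _)
  have h2 : ConvexOn ℝ (Set.Icc (0:ℝ) 1) (fun t : ℝ => (1 - t) * Real.log (1 - t)) := by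
    set A : ℝ →ᵃ[ℝ] ℝ := AffineMap.const ℝ ℝ (1:ℝ) - AffineMap.id ℝ ℝ with hAdef
    have hAval : ∀ t : ℝ, A t = 1 - t := by
      intro t
      simp [hAdef, AffineMap.coe_sub, AffineMap.coe_const, AffineMap.coe_id]
    have hA := Real.convexOn_mul_log.comp_affineMap A
    have hsub : Set.Icc (0:ℝ) 1 ⊆ ⇑A ⁻¹' Set.Ici (0:ℝ) := by
      intro x hx
      simp only [Set.mem_preimage, Set.mem_Ici, hAval]
      linarith [hx.2]
    have := hA.subset hsub (convex_Icc _ _)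
    exact this.congr fun t _ => by simp [Function.comp, hAval]
  have h3 : ConvexOn ℝ (Set.Icc (0:ℝ) 1)
      (fun t : ℝ => (Real.log (1 - q) - Real.log q) * t + (- Real.log (1 - q))) := by
    have := (((Real.log (1 - q) - Real.log q) • (LinearMap.id : ℝ →ₗ[ℝ] ℝ)).convexOn
      (convex_Icc (0:ℝ) 1)).add_const (- Real.log (1 - q))
    exact this.congr fun t _ => by simp
  have := (h1.add h2).add h3
  refine this.congr fun t _ => ?_
  rw [klReal_eq hq0 hq1]
  rfl

lemma klReal_anti {p p' q : ℝ} (hq : q ∈ Set.Ioo (0:ℝ) 1) (hp0 : 0 ≤ p)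
    (hpp' : p ≤ p') (hp'q : p' ≤ q) : klReal p' q ≤ klReal p q := by
  have hpI : p ∈ Set.Icc (0:ℝ) 1 := ⟨hp0, by linarith [hq.2]⟩
  have hqI : q ∈ Set.Icc (0:ℝ) 1 := ⟨hq.1.le, hq.2.le⟩
  have hseg : p' ∈ segment ℝ p q := by
    rw [segment_eq_Icc (by linarith)]
    exact ⟨hpp', hp'q⟩
  have hmax := (convexOn_klReal hq.1.ne' hq.2.ne).le_on_segment hpI hqI hseg
  have hq0 : klReal q q = 0 := by
    rw [klReal, div_self hq.1.ne', div_self (by linarith [hq.2] : (1:ℝ) - q ≠ 0), Real.log_one]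
    ring
  have hnn := klReal_nonneg hpI hq
  rw [hq0] at hmax
  calc klReal p' q ≤ max (klReal p q) 0 := hmax
    _ = klReal p q := max_eq_left hnn

lemma le_klInv {p z p' B : ℝ} (hp : p ∈ Set.Icc (0:ℝ) 1) (hz : z ∈ Set.Icc (0:ℝ) 1)
    (hpp' : p ≤ p') (h : klBer p z ≤ (B : EReal)) : z ≤ klInv p' B := by
  set S' := {w : ℝ | w ∈ Set.Icc (0:ℝ) 1 ∧ klBer p' w ≤ (B : EReal)} with hS'
  have hbdd : BddAbove S' := ⟨1, fun w hw => hw.1.2⟩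
  have hB0 : 0 ≤ B := by
    have := le_trans (klBer_nonneg hp hz) h
    exact_mod_cast this
  rcases lt_or_ge p' z with hlt | hle
  · -- p' < z : z itself is in S'
    have hz0 : 0 < z := lt_of_le_of_lt (le_trans hp.1 hpp') hlt
    have hz1 : z < 1 := by
      rcases lt_or_eq_of_le hz.2 with h1 | h1
      · exact h1
      · exfalso
        rw [klBer, if_neg (by rw [h1]; norm_num), if_pos h1] at h
        split_ifs at h with hp1
        · rw [hp1] at hpp'; linarith
        · exact EReal.coe_ne_top B (top_le_iff.mp h)
    have hzo : z ∈ Set.Ioo (0:ℝ) 1 := ⟨hz0, hz1⟩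
    rw [klBer_of_Ioo hzo, EReal.coe_le_coe_iff] at h
    have hmem : z ∈ S' := by
      refine ⟨hz, ?_⟩
      rw [klBer_of_Ioo hzo, EReal.coe_le_coe_iff]
      exact le_trans (klReal_anti hzo hp.1 hpp' hlt.le) h
    exact le_csSup hbdd hmem
  · rcases le_or_gt p' 1 with hp'1 | hp'1
    · -- z ≤ p' ≤ 1 : p' is in S'
      have hmem : p' ∈ S' := by
        refine ⟨⟨le_trans hp.1 hpp', hp'1⟩, ?_⟩
        rw [klBer_self ⟨le_trans hp.1 hpp', hp'1⟩]
        exact_mod_cast hB0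
      exact le_trans hle (le_csSup hbdd hmem)
    · -- p' > 1 : sSup S' = 1
      apply le_of_forall_sub_le
      intro ε hε
      set C := p' * Real.log p' + p' * Real.log 2 + (1 - p') * Real.log (p' - 1) with hC
      set t := min (min (1/2 : ℝ) ε) (Real.exp ((B - C) / (p' - 1))) with ht
      have ht0 : 0 < t := lt_min (lt_min one_half_pos hε) (Real.exp_pos _)
      have ht2 : t ≤ 1/2 := le_trans (min_le_left _ _) (min_le_left _ _)
      have htε : t ≤ ε := le_trans (min_le_left _ _) (min_le_right _ _)
      have hte : t ≤ Real.exp ((B - C) / (p' - 1)) := min_le_right _ _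
      have hw : (1 : ℝ) - t ∈ Set.Ioo (0:ℝ) 1 := ⟨by linarith, by linarith⟩
      have hp'0 : (0:ℝ) < p' := by linarith
      have e1 : Real.log (p' / (1 - t)) = Real.log p' - Real.log (1 - t) :=
        Real.log_div hp'0.ne' hw.1.ne'
      have e2 : Real.log ((1 - p') / (1 - (1 - t))) = Real.log (p' - 1) - Real.log t := by
        have : (1 - p') / (1 - (1 - t)) = -((p' - 1) / t) := by ring
        rw [this, Real.log_neg_eq_log, Real.log_div (by linarith) ht0.ne']
      have hlog1 : Real.log (1/2 : ℝ) ≤ Real.log (1 - t) :=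
        Real.log_le_log one_half_pos (by linarith)
      have hlog2 : Real.log (1/2 : ℝ) = - Real.log 2 := by
        rw [one_div, Real.log_inv]
      have hlogt : Real.log t ≤ (B - C) / (p' - 1) := by
        calc Real.log t ≤ Real.log (Real.exp ((B - C) / (p' - 1))) := Real.log_le_log ht0 hte
          _ = (B - C) / (p' - 1) := Real.log_exp _
      have hmul : (p' - 1) * Real.log t ≤ B - C := by
        have := mul_le_mul_of_nonneg_left hlogt (by linarith : (0:ℝ) ≤ p' - 1)
        rwa [mul_div_cancel₀ _ (by linarith : p' - 1 ≠ 0)] at this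
      have hklw : klReal p' (1 - t) ≤ B := by
        rw [klReal, e1, e2]
        have expand : p' * (Real.log p' - Real.log (1 - t))
            + (1 - p') * (Real.log (p' - 1) - Real.log t)
            = p' * Real.log p' - p' * Real.log (1 - t) + (1 - p') * Real.log (p' - 1)
              + (p' - 1) * Real.log t := by ring
        rw [expand]
        have hb1 : - (p' * Real.log (1 - t)) ≤ p' * Real.log 2 := by
          have := mul_le_mul_of_nonneg_left hlog1 hp'0.le
          rw [hlog2] at this
          linarith
        linarith
      have hmem : (1 : ℝ) - t ∈ S' := by
        refine ⟨⟨hw.1.le, hw.2.le⟩, ?_⟩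
        rw [klBer_of_Ioo hw, EReal.coe_le_coe_iff]
        exact hklw
      have h1 : (1:ℝ) - t ≤ sSup S' := le_csSup hbdd hmem
      show z - ε ≤ sSup S'
      linarith [hz.2]

lemma round_spec {K : ℕ} (hK : 0 < K) {Δ : ℝ} (hΔ : Δ = 1 / (K : ℝ)) {x : ℝ}
    (hx : x ∈ Set.Icc (0:ℝ) 1) :
    |x - (2 * ((min (Nat.floor (x * K)) (K - 1) : ℕ) : ℝ) + 1) * Δ / 2| ≤ Δ / 2 ∧
    (2 * ((min (Nat.floor (x * K)) (K - 1) : ℕ) : ℝ) + 1) * Δ / 2 ∈ Set.Icc (0:ℝ) 1 := by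
  have hK0 : (0:ℝ) < K := Nat.cast_pos.2 hK
  have hΔ0 : 0 < Δ := by rw [hΔ]; positivity
  have hKΔ : (K : ℝ) * Δ = 1 := by rw [hΔ]; field_simp
  set j : ℕ := min (Nat.floor (x * K)) (K - 1) with hj
  have hjK : (j : ℝ) ≤ (K : ℝ) - 1 := by
    have : j ≤ K - 1 := min_le_right _ _
    have h2 : (j:ℝ) ≤ ((K-1 : ℕ) : ℝ) := Nat.cast_le.2 this
    rwa [Nat.cast_sub hK, Nat.cast_one] at h2
  have hub : (2 * (j : ℝ) + 1) * Δ / 2 ≤ 1 := by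
    have : (2 * (j : ℝ) + 1) * Δ ≤ (2 * ((K:ℝ) - 1) + 1) * Δ := by
      apply mul_le_mul_of_nonneg_right (by linarith) hΔ0.le
    have e : (2 * ((K:ℝ) - 1) + 1) * Δ = 2 - Δ := by
      have : (2 * ((K:ℝ) - 1) + 1) * Δ = 2 * ((K:ℝ) * Δ) - Δ := by ring
      rw [this, hKΔ]; ring
    linarith
  have hlb : (0:ℝ) ≤ (2 * (j : ℝ) + 1) * Δ / 2 := by positivity
  refine ⟨?_, hlb, hub⟩
  have hxK0 : 0 ≤ x * K := mul_nonneg hx.1 hK0.le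
  rcases lt_or_ge (x * K) K with hcase | hcase
  · -- x*K < K, so j = ⌊x*K⌋
    have hfloor_lt : Nat.floor (x * K) < K := by
      rw [Nat.floor_lt hxK0]
      exact_mod_cast hcase
    have hjeq : j = Nat.floor (x * K) := by
      rw [hj]; exact min_eq_left (by omega)
    have h1 : (j : ℝ) ≤ x * K := by rw [hjeq]; exact Nat.floor_le hxK0
    have h2 : x * K < (j : ℝ) + 1 := by rw [hjeq]; exact Nat.lt_floor_add_one _
    have hx_eq : x * K * Δ = x := by rw [mul_assoc, hKΔ, mul_one]
    have hbl : (j : ℝ) * Δ ≤ x := by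
      have := mul_le_mul_of_nonneg_right h1 hΔ0.le
      rwa [hx_eq] at this
    have hbu : x ≤ ((j : ℝ) + 1) * Δ := by
      have := mul_le_mul_of_nonneg_right h2.le hΔ0.le
      rwa [hx_eq] at this
    rw [abs_le]
    constructor <;> nlinarith
  · -- x*K ≥ K, so x = 1 and j = K-1
    have hx1 : x = 1 := by
      have : (1:ℝ) ≤ x := by
        rw [← mul_le_mul_iff_left₀ hK0]
        calc (1:ℝ) * K = K := one_mul _
          _ ≤ x * K := hcase
      linarith [hx.2]
    have hfl : K ≤ Nat.floor (x * K) := by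
      apply Nat.le_floor
      exact_mod_cast hcase
    have hjeq : j = K - 1 := by rw [hj]; exact min_eq_right (by omega)
    have hjR : (j : ℝ) = (K : ℝ) - 1 := by
      rw [hjeq, Nat.cast_sub hK, Nat.cast_one]
    rw [hx1, hjR, abs_le]
    have e : (2 * ((K:ℝ) - 1) + 1) * Δ / 2 = 1 - Δ / 2 := by
      have h2 : (2 * ((K:ℝ) - 1) + 1) * Δ = 2 * ((K:ℝ) * Δ) - Δ := by ring
      rw [div_eq_iff (two_ne_zero), h2, hKΔ]; ring
    rw [e]
    constructor <;> linarith

lemma sum_ab_const {nC : ℕ} (a b : Fin nC → ℝ) (ha : ∑ c, a c = 1) (hb : ∑ c, b c = 1)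
    (r : ℝ) : ∑ c₁ : Fin nC, ∑ c₂ : Fin nC, a c₁ * b c₂ * r = r := by
  have : ∀ c₁, ∑ c₂ : Fin nC, a c₁ * b c₂ * r = a c₁ * r := by
    intro c₁
    rw [show (fun c₂ => a c₁ * b c₂ * r) = (fun c₂ => (a c₁ * r) * b c₂) from by
      funext c₂; ring]
    rw [← Finset.mul_sum, hb, mul_one]
  rw [Finset.sum_congr rfl (fun c₁ _ => this c₁), ← Finset.sum_mul, ha, one_mul]

lemma sq_shift {w g g' Δ : ℝ} (hw : w ∈ Set.Icc (0:ℝ) 1) (hg : g ∈ Set.Icc (0:ℝ) 1)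
    (hg' : g' ∈ Set.Icc (0:ℝ) 1) (h : |g - g'| ≤ Δ / 2) :
    (w - g) ^ 2 ≤ (w - g') ^ 2 + Δ := by
  rw [abs_le] at h
  obtain ⟨h1, h2⟩ := h
  nlinarith [hw.1, hw.2, hg.1, hg.2, hg'.1, hg'.2]

lemma sum_loss_le {nC : ℕ} (a b : Fin nC → ℝ) (ha0 : ∀ c, 0 ≤ a c) (hb0 : ∀ c, 0 ≤ b c)
    (ha : ∑ c, a c = 1) (hb : ∑ c, b c = 1) {w : ℝ} (hw : w ∈ Set.Icc (0:ℝ) 1)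
    (g₁ g₂ : Fin nC → Fin nC → ℝ)
    (hg₁ : ∀ c₁ c₂, g₁ c₁ c₂ ∈ Set.Icc (0:ℝ) 1) (hg₂ : ∀ c₁ c₂, g₂ c₁ c₂ ∈ Set.Icc (0:ℝ) 1)
    {Δ : ℝ} (hclose : ∀ c₁ c₂, |g₁ c₁ c₂ - g₂ c₁ c₂| ≤ Δ / 2) :
    ∑ c₁ : Fin nC, ∑ c₂ : Fin nC, a c₁ * b c₂ * (w - g₁ c₁ c₂) ^ 2
      ≤ (∑ c₁ : Fin nC, ∑ c₂ : Fin nC, a c₁ * b c₂ * (w - g₂ c₁ c₂) ^ 2) + Δ := by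
  have step : ∑ c₁ : Fin nC, ∑ c₂ : Fin nC, a c₁ * b c₂ * (w - g₁ c₁ c₂) ^ 2
      ≤ ∑ c₁ : Fin nC, ∑ c₂ : Fin nC, (a c₁ * b c₂ * (w - g₂ c₁ c₂) ^ 2 + a c₁ * b c₂ * Δ) := by
    refine Finset.sum_le_sum fun c₁ _ => Finset.sum_le_sum fun c₂ _ => ?_
    have hab : 0 ≤ a c₁ * b c₂ := mul_nonneg (ha0 c₁) (hb0 c₂)
    have := mul_le_mul_of_nonneg_left (sq_shift hw (hg₁ c₁ c₂) (hg₂ c₁ c₂) (hclose c₁ c₂)) hab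
    linarith [this]
  calc ∑ c₁ : Fin nC, ∑ c₂ : Fin nC, a c₁ * b c₂ * (w - g₁ c₁ c₂) ^ 2
      ≤ ∑ c₁ : Fin nC, ∑ c₂ : Fin nC,
          (a c₁ * b c₂ * (w - g₂ c₁ c₂) ^ 2 + a c₁ * b c₂ * Δ) := step
    _ = (∑ c₁ : Fin nC, ∑ c₂ : Fin nC, a c₁ * b c₂ * (w - g₂ c₁ c₂) ^ 2)
        + ∑ c₁ : Fin nC, ∑ c₂ : Fin nC, a c₁ * b c₂ * Δ := by
      rw [← Finset.sum_add_distrib]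
      exact Finset.sum_congr rfl fun c₁ _ => Finset.sum_add_distrib
    _ = _ := by rw [sum_ab_const a b ha hb Δ]

lemma sum_loss_nonneg {nC : ℕ} (a b : Fin nC → ℝ) (ha0 : ∀ c, 0 ≤ a c) (hb0 : ∀ c, 0 ≤ b c)
    (w : ℝ) (g : Fin nC → Fin nC → ℝ) :
    0 ≤ ∑ c₁ : Fin nC, ∑ c₂ : Fin nC, a c₁ * b c₂ * (w - g c₁ c₂) ^ 2 := by
  refine Finset.sum_nonneg fun c₁ _ => Finset.sum_nonneg fun c₂ _ => ?_
  exact mul_nonneg (mul_nonneg (ha0 c₁) (hb0 c₂)) (sq_nonneg _)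

lemma sum_loss_le_one {nC : ℕ} (a b : Fin nC → ℝ) (ha0 : ∀ c, 0 ≤ a c) (hb0 : ∀ c, 0 ≤ b c)
    (ha : ∑ c, a c = 1) (hb : ∑ c, b c = 1) {w : ℝ} (hw : w ∈ Set.Icc (0:ℝ) 1)
    {g : Fin nC → Fin nC → ℝ} (hg : ∀ c₁ c₂, g c₁ c₂ ∈ Set.Icc (0:ℝ) 1) :
    ∑ c₁ : Fin nC, ∑ c₂ : Fin nC, a c₁ * b c₂ * (w - g c₁ c₂) ^ 2 ≤ 1 := by
  have step : ∑ c₁ : Fin nC, ∑ c₂ : Fin nC, a c₁ * b c₂ * (w - g c₁ c₂) ^ 2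
      ≤ ∑ c₁ : Fin nC, ∑ c₂ : Fin nC, a c₁ * b c₂ * 1 := by
    refine Finset.sum_le_sum fun c₁ _ => Finset.sum_le_sum fun c₂ _ => ?_
    apply mul_le_mul_of_nonneg_left _ (mul_nonneg (ha0 c₁) (hb0 c₂))
    nlinarith [hw.1, hw.2, (hg c₁ c₂).1, (hg c₁ c₂).2]
  rw [sum_ab_const a b ha hb 1] at step
  exact step

lemma loss_measurable {X : Type*} [Fintype X] [MeasurableSpace X] [MeasurableSingletonClass X]
    {nC : ℕ} (qC : X → Fin nC → ℝ) (g : Fin nC → Fin nC → ℝ) :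
    Measurable (fun z : X × X × unitInterval =>
      ∑ c₁ : Fin nC, ∑ c₂ : Fin nC, qC z.1 c₁ * qC z.2.1 c₂ * ((z.2.2 : ℝ) - g c₁ c₂) ^ 2) := by
  apply Finset.measurable_sum
  intro c₁ _
  apply Finset.measurable_sum
  intro c₂ _
  have h1 : Measurable (fun z : X × X × unitInterval => qC z.1 c₁) :=
    (measurable_of_countable (fun x => qC x c₁)).comp measurable_fst
  have h2 : Measurable (fun z : X × X × unitInterval => qC z.2.1 c₂) :=
    (measurable_of_countable (fun x => qC x c₂)).comp (measurable_fst.comp measurable_snd)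
  have h3 : Measurable (fun z : X × X × unitInterval => ((z.2.2 : ℝ) - g c₁ c₂) ^ 2) := by
    apply Measurable.pow_const
    exact (measurable_subtype_coe.comp (measurable_snd.comp measurable_snd)).sub measurable_const
  exact (h1.mul h2).mul h3

lemma loss_integrable {X : Type*} [Fintype X] [MeasurableSpace X] [MeasurableSingletonClass X]
    {nC : ℕ} (p : Measure (X × X × unitInterval)) [IsProbabilityMeasure p]
    (qC : X → Fin nC → ℝ) (g : Fin nC → Fin nC → ℝ)
    (hq0 : ∀ x c, 0 ≤ qC x c) (hq1 : ∀ x, ∑ c, qC x c = 1)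
    (hg : ∀ c₁ c₂, g c₁ c₂ ∈ Set.Icc (0:ℝ) 1) :
    Integrable (fun z : X × X × unitInterval =>
      ∑ c₁ : Fin nC, ∑ c₂ : Fin nC, qC z.1 c₁ * qC z.2.1 c₂ * ((z.2.2 : ℝ) - g c₁ c₂) ^ 2) p := by
  refine (integrable_const (1:ℝ)).mono' (loss_measurable qC g).aestronglyMeasurable
    (Filter.Eventually.of_forall fun z => ?_)
  rw [Real.norm_eq_abs, abs_of_nonneg
    (sum_loss_nonneg _ _ (hq0 z.1) (hq0 z.2.1) _ g)]
  exact sum_loss_le_one _ _ (hq0 z.1) (hq0 z.2.1) (hq1 z.1) (hq1 z.2.1) z.2.2.2 hg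

/-- Correction of the PAC-Bayesian graph clustering bound for edge weight quantization:
if the bound holds with probability `1 − δ` for all models whose cluster-level
predictions take values in the uniform grid `{Δ/2, 3Δ/2, …, 1 − Δ/2}` with `Δ = 1/K`,
then with probability `1 − δ`, simultaneously for all models with arbitrary
cluster-level predictions `g : C × C → [0,1]` and quadratic loss,
`L(Q) ≤ kl⁻¹(L̂(Q) + Δ + Δ²/4, (|X|·Ī(X;C) + |C| ln|X| − |C|² ln Δ + ½ ln(4N/δ²))/N)
        + Δ + Δ²/4`. -/
theorem quantized_graph_clustering_bound
    {X : Type*} [Fintype X] [Nonempty X] [MeasurableSpace X] [MeasurableSingletonClass X]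
    (p : Measure (X × X × unitInterval)) [IsProbabilityMeasure p]
    (N : ℕ) (hN : 0 < N) (δ : ℝ) (hδ0 : 0 < δ) (hδ1 : δ ≤ 1)
    (nC : ℕ) (hnC : 0 < nC)
    (K : ℕ) (hK : 0 < K) (Δ : ℝ) (hΔ : Δ = 1 / (K : ℝ))
    -- the grid-valued version of the PAC-Bayesian graph clustering bound
    (hgrid :
      Measure.pi (fun _ : Fin N => p)
        {S : Fin N → X × X × unitInterval |
          ∀ (qC : X → Fin nC → ℝ) (g : Fin nC → Fin nC → ℝ),
            (∀ x c, 0 ≤ qC x c) → (∀ x, (∑ c, qC x c) = 1) →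
            (∀ c₁ c₂, ∃ j : Fin K, g c₁ c₂ = (2 * (j : ℝ) + 1) * Δ / 2) →
            klBer
              ((1 / (N : ℝ)) * ∑ t : Fin N, ∑ c₁ : Fin nC, ∑ c₂ : Fin nC,
                qC (S t).1 c₁ * qC (S t).2.1 c₂ * (((S t).2.2 : ℝ) - g c₁ c₂) ^ 2)
              (∫ z, (∑ c₁ : Fin nC, ∑ c₂ : Fin nC,
                qC z.1 c₁ * qC z.2.1 c₂ * ((z.2.2 : ℝ) - g c₁ c₂) ^ 2) ∂p)
            ≤ ((((Fintype.card X : ℝ) * barMI qC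
                  + (nC : ℝ) * Real.log (Fintype.card X)
                  + (nC : ℝ) ^ 2 * Real.log (1 / Δ)
                  + (1 / 2) * Real.log (4 * N) - Real.log δ) / (N : ℝ) : ℝ) : EReal)}
        ≥ ENNReal.ofReal (1 - δ)) :
    Measure.pi (fun _ : Fin N => p)
      {S : Fin N → X × X × unitInterval |
        ∀ (qC : X → Fin nC → ℝ) (g : Fin nC → Fin nC → ℝ),
          (∀ x c, 0 ≤ qC x c) → (∀ x, (∑ c, qC x c) = 1) →
          (∀ c₁ c₂, g c₁ c₂ ∈ Set.Icc (0 : ℝ) 1) →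
          (∫ z, (∑ c₁ : Fin nC, ∑ c₂ : Fin nC,
              qC z.1 c₁ * qC z.2.1 c₂ * ((z.2.2 : ℝ) - g c₁ c₂) ^ 2) ∂p)
            ≤ klInv
                ((1 / (N : ℝ)) * (∑ t : Fin N, ∑ c₁ : Fin nC, ∑ c₂ : Fin nC,
                    qC (S t).1 c₁ * qC (S t).2.1 c₂ * (((S t).2.2 : ℝ) - g c₁ c₂) ^ 2)
                  + Δ + Δ ^ 2 / 4)
                (((Fintype.card X : ℝ) * barMI qC
                  + (nC : ℝ) * Real.log (Fintype.card X)
                  - (nC : ℝ) ^ 2 * Real.log Δ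
                  + (1 / 2) * Real.log (4 * N / δ ^ 2)) / (N : ℝ))
              + Δ + Δ ^ 2 / 4} 
      ≥ ENNReal.ofReal (1 - δ) := by
  refine le_trans hgrid (measure_mono ?_)
  intro S hS
  simp only [Set.mem_setOf_eq] at hS ⊢
  intro qC g hq0 hq1 hg
  have hK0 : (0:ℝ) < K := Nat.cast_pos.2 hK
  have hΔ0 : 0 < Δ := by rw [hΔ]; positivity
  have hNR : (N:ℝ) ≠ 0 := Nat.cast_ne_zero.2 hN.ne'
  have hN0 : (0:ℝ) < N := Nat.cast_pos.2 hN
  set gq : Fin nC → Fin nC → ℝ := fun c₁ c₂ =>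
    (2 * ((min (Nat.floor (g c₁ c₂ * K)) (K - 1) : ℕ) : ℝ) + 1) * Δ / 2 with hgqdef
  have hround : ∀ c₁ c₂, |g c₁ c₂ - gq c₁ c₂| ≤ Δ / 2 ∧ gq c₁ c₂ ∈ Set.Icc (0:ℝ) 1 :=
    fun c₁ c₂ => round_spec hK hΔ (hg c₁ c₂)
  have hgqmem : ∀ c₁ c₂, gq c₁ c₂ ∈ Set.Icc (0:ℝ) 1 := fun c₁ c₂ => (hround c₁ c₂).2
  have hclose : ∀ c₁ c₂, |g c₁ c₂ - gq c₁ c₂| ≤ Δ / 2 := fun c₁ c₂ => (hround c₁ c₂).1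
  have hclose' : ∀ c₁ c₂, |gq c₁ c₂ - g c₁ c₂| ≤ Δ / 2 := fun c₁ c₂ => by
    rw [abs_sub_comm]; exact hclose c₁ c₂
  have hgridval : ∀ c₁ c₂, ∃ j : Fin K, gq c₁ c₂ = (2 * (j : ℝ) + 1) * Δ / 2 := by
    intro c₁ c₂
    refine ⟨⟨min (Nat.floor (g c₁ c₂ * K)) (K - 1),
      Nat.lt_of_le_of_lt (min_le_right _ _) (Nat.sub_lt hK Nat.one_pos)⟩, rfl⟩
  have hSg := hS qC gq hq0 hq1 hgridval
  -- empirical quantity for gq is in [0,1]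
  have hphat0 : 0 ≤ (1 / (N : ℝ)) * ∑ t : Fin N, ∑ c₁ : Fin nC, ∑ c₂ : Fin nC,
      qC (S t).1 c₁ * qC (S t).2.1 c₂ * (((S t).2.2 : ℝ) - gq c₁ c₂) ^ 2 := by
    apply mul_nonneg (by positivity)
    exact Finset.sum_nonneg fun t _ =>
      sum_loss_nonneg _ _ (hq0 (S t).1) (hq0 (S t).2.1) _ gq
  have hphat1 : (1 / (N : ℝ)) * (∑ t : Fin N, ∑ c₁ : Fin nC, ∑ c₂ : Fin nC,
      qC (S t).1 c₁ * qC (S t).2.1 c₂ * (((S t).2.2 : ℝ) - gq c₁ c₂) ^ 2) ≤ 1 := by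
    have hsum : (∑ t : Fin N, ∑ c₁ : Fin nC, ∑ c₂ : Fin nC,
        qC (S t).1 c₁ * qC (S t).2.1 c₂ * (((S t).2.2 : ℝ) - gq c₁ c₂) ^ 2) ≤ (N : ℝ) := by
      calc (∑ t : Fin N, ∑ c₁ : Fin nC, ∑ c₂ : Fin nC,
          qC (S t).1 c₁ * qC (S t).2.1 c₂ * (((S t).2.2 : ℝ) - gq c₁ c₂) ^ 2)
          ≤ ∑ _t : Fin N, (1:ℝ) := Finset.sum_le_sum fun t _ =>
            sum_loss_le_one _ _ (hq0 (S t).1) (hq0 (S t).2.1) (hq1 (S t).1) (hq1 (S t).2.1)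
              (S t).2.2.2 hgqmem
        _ = (N : ℝ) := by simp
    calc (1 / (N : ℝ)) * (∑ t : Fin N, ∑ c₁ : Fin nC, ∑ c₂ : Fin nC,
        qC (S t).1 c₁ * qC (S t).2.1 c₂ * (((S t).2.2 : ℝ) - gq c₁ c₂) ^ 2)
        ≤ (1 / (N : ℝ)) * (N : ℝ) := by
          apply mul_le_mul_of_nonneg_left hsum (by positivity)
      _ = 1 := by field_simp
  -- empirical quantity for gq vs for g
  have hempgap : (1 / (N : ℝ)) * (∑ t : Fin N, ∑ c₁ : Fin nC, ∑ c₂ : Fin nC,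
      qC (S t).1 c₁ * qC (S t).2.1 c₂ * (((S t).2.2 : ℝ) - gq c₁ c₂) ^ 2)
      ≤ (1 / (N : ℝ)) * (∑ t : Fin N, ∑ c₁ : Fin nC, ∑ c₂ : Fin nC,
      qC (S t).1 c₁ * qC (S t).2.1 c₂ * (((S t).2.2 : ℝ) - g c₁ c₂) ^ 2) + Δ := by
    have hsum : (∑ t : Fin N, ∑ c₁ : Fin nC, ∑ c₂ : Fin nC,
        qC (S t).1 c₁ * qC (S t).2.1 c₂ * (((S t).2.2 : ℝ) - gq c₁ c₂) ^ 2)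
        ≤ (∑ t : Fin N, ((∑ c₁ : Fin nC, ∑ c₂ : Fin nC,
        qC (S t).1 c₁ * qC (S t).2.1 c₂ * (((S t).2.2 : ℝ) - g c₁ c₂) ^ 2) + Δ)) :=
      Finset.sum_le_sum fun t _ =>
        sum_loss_le _ _ (hq0 (S t).1) (hq0 (S t).2.1) (hq1 (S t).1) (hq1 (S t).2.1)
          (S t).2.2.2 gq g hgqmem hg hclose'
    rw [Finset.sum_add_distrib, Finset.sum_const, Finset.card_univ, Fintype.card_fin] at hsum
    have := mul_le_mul_of_nonneg_left hsum (by positivity : (0:ℝ) ≤ 1 / (N:ℝ))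
    calc (1 / (N : ℝ)) * (∑ t : Fin N, ∑ c₁ : Fin nC, ∑ c₂ : Fin nC,
        qC (S t).1 c₁ * qC (S t).2.1 c₂ * (((S t).2.2 : ℝ) - gq c₁ c₂) ^ 2)
        ≤ (1 / (N : ℝ)) * ((∑ t : Fin N, ∑ c₁ : Fin nC, ∑ c₂ : Fin nC,
          qC (S t).1 c₁ * qC (S t).2.1 c₂ * (((S t).2.2 : ℝ) - g c₁ c₂) ^ 2) + N • Δ) := this
      _ = (1 / (N : ℝ)) * (∑ t : Fin N, ∑ c₁ : Fin nC, ∑ c₂ : Fin nC,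
          qC (S t).1 c₁ * qC (S t).2.1 c₂ * (((S t).2.2 : ℝ) - g c₁ c₂) ^ 2) + Δ := by
        rw [nsmul_eq_mul]
        field_simp
  -- true risk of gq is in [0,1]
  have hint_g := loss_integrable p qC g hq0 hq1 hg
  have hint_gq := loss_integrable p qC gq hq0 hq1 hgqmem
  have hL0 : 0 ≤ ∫ z, (∑ c₁ : Fin nC, ∑ c₂ : Fin nC,
      qC z.1 c₁ * qC z.2.1 c₂ * ((z.2.2 : ℝ) - gq c₁ c₂) ^ 2) ∂p :=
    integral_nonneg fun z => sum_loss_nonneg _ _ (hq0 z.1) (hq0 z.2.1) _ gq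
  have hL1 : (∫ z, (∑ c₁ : Fin nC, ∑ c₂ : Fin nC,
      qC z.1 c₁ * qC z.2.1 c₂ * ((z.2.2 : ℝ) - gq c₁ c₂) ^ 2) ∂p) ≤ 1 := by
    calc (∫ z, (∑ c₁ : Fin nC, ∑ c₂ : Fin nC,
        qC z.1 c₁ * qC z.2.1 c₂ * ((z.2.2 : ℝ) - gq c₁ c₂) ^ 2) ∂p)
        ≤ ∫ _z, (1:ℝ) ∂p := integral_mono hint_gq (integrable_const 1) fun z =>
          sum_loss_le_one _ _ (hq0 z.1) (hq0 z.2.1) (hq1 z.1) (hq1 z.2.1) z.2.2.2 hgqmem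
      _ = 1 := by simp
  -- true risk gap
  have hLgap : (∫ z, (∑ c₁ : Fin nC, ∑ c₂ : Fin nC,
      qC z.1 c₁ * qC z.2.1 c₂ * ((z.2.2 : ℝ) - g c₁ c₂) ^ 2) ∂p)
      ≤ (∫ z, (∑ c₁ : Fin nC, ∑ c₂ : Fin nC,
      qC z.1 c₁ * qC z.2.1 c₂ * ((z.2.2 : ℝ) - gq c₁ c₂) ^ 2) ∂p) + Δ := by
    calc (∫ z, (∑ c₁ : Fin nC, ∑ c₂ : Fin nC,
        qC z.1 c₁ * qC z.2.1 c₂ * ((z.2.2 : ℝ) - g c₁ c₂) ^ 2) ∂p)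
        ≤ ∫ z, ((∑ c₁ : Fin nC, ∑ c₂ : Fin nC,
          qC z.1 c₁ * qC z.2.1 c₂ * ((z.2.2 : ℝ) - gq c₁ c₂) ^ 2) + Δ) ∂p := by
          refine integral_mono hint_g (hint_gq.add (integrable_const Δ)) fun z => ?_
          exact sum_loss_le _ _ (hq0 z.1) (hq0 z.2.1) (hq1 z.1) (hq1 z.2.1)
            z.2.2.2 g gq hg hgqmem hclose
      _ = (∫ z, (∑ c₁ : Fin nC, ∑ c₂ : Fin nC,
          qC z.1 c₁ * qC z.2.1 c₂ * ((z.2.2 : ℝ) - gq c₁ c₂) ^ 2) ∂p) + Δ := by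
          rw [integral_add hint_gq (integrable_const Δ)]
          simp
  -- the two bounds coincide
  have hBeq : (((Fintype.card X : ℝ) * barMI qC
      + (nC : ℝ) * Real.log (Fintype.card X)
      + (nC : ℝ) ^ 2 * Real.log (1 / Δ)
      + (1 / 2) * Real.log (4 * N) - Real.log δ) / (N : ℝ) : ℝ)
      = ((Fintype.card X : ℝ) * barMI qC
      + (nC : ℝ) * Real.log (Fintype.card X)
      - (nC : ℝ) ^ 2 * Real.log Δ
      + (1 / 2) * Real.log (4 * N / δ ^ 2)) / (N : ℝ) := by
    have h1 : Real.log (1 / Δ) = -Real.log Δ := by rw [one_div, Real.log_inv]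
    have h2 : Real.log (4 * N / δ ^ 2) = Real.log (4 * N) - 2 * Real.log δ := by
      rw [Real.log_div (by positivity) (pow_ne_zero 2 hδ0.ne'), Real.log_pow]
      push_cast
      ring
    rw [h1, h2]
    ring
  rw [hBeq] at hSg
  have hkey := le_klInv ⟨hphat0, hphat1⟩ ⟨hL0, hL1⟩
    (by linarith [sq_nonneg Δ] :
      (1 / (N : ℝ)) * ∑ t : Fin N, ∑ c₁ : Fin nC, ∑ c₂ : Fin nC,
        qC (S t).1 c₁ * qC (S t).2.1 c₂ * (((S t).2.2 : ℝ) - gq c₁ c₂) ^ 2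
      ≤ (1 / (N : ℝ)) * (∑ t : Fin N, ∑ c₁ : Fin nC, ∑ c₂ : Fin nC,
        qC (S t).1 c₁ * qC (S t).2.1 c₂ * (((S t).2.2 : ℝ) - g c₁ c₂) ^ 2) + Δ + Δ ^ 2 / 4)
    hSg
  linarith [sq_nonneg Δ, hkey, hLgap]
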